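/- Let ħ > 0, let X and Y be real symmetric n×n matrices with X positive definite, and set M = X + iY. Define the squeezed coherent state Φ_M(x) = (πħ)^{−n/4} (det X)^{1/4} e^{−⟨(X+iY)x, x⟩/(2ħ)} on ℝⁿ. Then for every z = (x,p) ∈ ℝ²ⁿ, the Wigner transform satisfies WΦ_M(z) = (πħ)^{−n} e^{−⟨Gz, z⟩/ħ}, where G is the real 2n×2n block matrix G = ((X + Y X⁻¹ Y, Y X⁻¹),(X⁻¹ Y, X⁻¹)). -/

import Mathlib

open Matrix MeasureTheory Complex Real

noncomputable section

/-- The Wigner transform of `ψ : ℝⁿ → ℂ`: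
`Wψ(x,p) = (2πħ)⁻ⁿ ∫ e^{-i p·y/ħ} ψ(x + y/2) conj(ψ(x - y/2)) dy`. -/
def wigner (n : ℕ) (hb : ℝ) (ψ : (Fin n → ℝ) → ℂ) (x p : Fin n → ℝ) : ℂ :=
  (((2 * Real.pi * hb) ^ n : ℝ)⁻¹ : ℂ) *
    ∫ y : Fin n → ℝ,
      Complex.exp (-(Complex.I * ((p ⬝ᵥ y : ℝ) : ℂ)) / (hb : ℂ)) *
        ψ (x + y / 2) * (starRingEnd ℂ) (ψ (x - y / 2))

/-- The squeezed coherent state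
`Φ_M(x) = (πħ)^{-n/4} (det X)^{1/4} e^{-⟨(X+iY)x, x⟩/(2ħ)}` with `M = X + iY`. -/
def squeezed (n : ℕ) (hb : ℝ) (X Y : Matrix (Fin n) (Fin n) ℝ) (x : Fin n → ℝ) : ℂ :=
  (((Real.pi * hb) ^ (-(n : ℝ) / 4) * X.det ^ ((1 : ℝ) / 4) : ℝ) : ℂ) *
    Complex.exp (-(((X.mulVec x ⬝ᵥ x : ℝ) : ℂ) +
      Complex.I * ((Y.mulVec x ⬝ᵥ x : ℝ) : ℂ)) / (2 * (hb : ℂ)))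

lemma symm_dot {n : ℕ} {W : Matrix (Fin n) (Fin n) ℝ} (hW : W.IsSymm) (a b : Fin n → ℝ) :
    W *ᵥ a ⬝ᵥ b = W *ᵥ b ⬝ᵥ a := by
  rw [dotProduct_comm, dotProduct_mulVec, ← mulVec_transpose, hW.eq]

lemma half_smul {n : ℕ} (y : Fin n → ℝ) : y / 2 = (2⁻¹ : ℝ) • y := by
  funext i; simp [div_eq_inv_mul]

lemma quad_sum {n : ℕ} {X : Matrix (Fin n) (Fin n) ℝ} (hX : X.IsSymm) (x y : Fin n → ℝ) :
    X *ᵥ (x + y / 2) ⬝ᵥ (x + y / 2) + X *ᵥ (x - y / 2) ⬝ᵥ (x - y / 2)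
      = 2 * (X *ᵥ x ⬝ᵥ x) + (X *ᵥ y ⬝ᵥ y) / 2 := by
  rw [half_smul]
  simp only [mulVec_add, mulVec_sub, mulVec_smul, add_dotProduct, sub_dotProduct,
    dotProduct_add, dotProduct_sub, dotProduct_smul, smul_dotProduct, smul_eq_mul,
    symm_dot hX y x]
  ring

lemma lin_diff {n : ℕ} {Y : Matrix (Fin n) (Fin n) ℝ} (hY : Y.IsSymm) (x y : Fin n → ℝ) :
    Y *ᵥ (x + y / 2) ⬝ᵥ (x + y / 2) - Y *ᵥ (x - y / 2) ⬝ᵥ (x - y / 2)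
      = 2 * (Y *ᵥ x ⬝ᵥ y) := by
  rw [half_smul]
  simp only [mulVec_add, mulVec_sub, mulVec_smul, add_dotProduct, sub_dotProduct,
    dotProduct_add, dotProduct_sub, dotProduct_smul, smul_dotProduct, smul_eq_mul,
    symm_dot hY y x]
  ring

lemma Gsum {n : ℕ} {X Y : Matrix (Fin n) (Fin n) ℝ} (hX : X.IsSymm) (hY : Y.IsSymm)
    (x p : Fin n → ℝ) :
    (Matrix.fromBlocks (X + Y * X⁻¹ * Y) (Y * X⁻¹) (X⁻¹ * Y) X⁻¹) *ᵥ Sum.elim x p ⬝ᵥ Sum.elim x p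
      = X *ᵥ x ⬝ᵥ x + X⁻¹ *ᵥ (Y *ᵥ x + p) ⬝ᵥ (Y *ᵥ x + p) := by
  rw [fromBlocks_mulVec, sumElim_dotProduct_sumElim]
  have e1 : Y *ᵥ (X⁻¹ *ᵥ (Y *ᵥ x)) ⬝ᵥ x = X⁻¹ *ᵥ (Y *ᵥ x) ⬝ᵥ (Y *ᵥ x) := by
    rw [symm_dot hY, dotProduct_comm]
  have e2 : Y *ᵥ (X⁻¹ *ᵥ p) ⬝ᵥ x = X⁻¹ *ᵥ p ⬝ᵥ (Y *ᵥ x) := by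
    rw [symm_dot hY, dotProduct_comm]
  simp only [add_mulVec, mulVec_add, add_dotProduct, dotProduct_add, ← mulVec_mulVec,
    Sum.elim_comp_inl, Sum.elim_comp_inr]
  rw [e1, e2]
  ring

lemma const_id (n : ℕ) {hb t : ℝ} (hhb : 0 < hb) (ht : 0 < t) :
    (((2 * Real.pi * hb) ^ n)⁻¹ : ℝ) *
      ((Real.pi * hb) ^ (-(n : ℝ) / 4) * t ^ ((1 : ℝ) / 4)) ^ 2 *
      ((Real.pi / (4 * hb)⁻¹) ^ ((n : ℝ) / 2) * (Real.sqrt t)⁻¹)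
    = (((Real.pi * hb) ^ n)⁻¹ : ℝ) := by
  have hπ := Real.pi_pos
  have hA : (0 : ℝ) < Real.pi * hb := by positivity
  have h1 : ((Real.pi * hb) ^ (-(n : ℝ) / 4)) ^ 2 = (Real.pi * hb) ^ (-(n : ℝ) / 2) := by
    rw [← Real.rpow_natCast ((Real.pi * hb) ^ (-(n : ℝ) / 4)) 2, ← Real.rpow_mul hA.le]
    congr 1
    push_cast; ring
  have h2 : (t ^ ((1 : ℝ) / 4)) ^ 2 = Real.sqrt t := by
    rw [← Real.rpow_natCast (t ^ ((1 : ℝ) / 4)) 2, ← Real.rpow_mul ht.le, Real.sqrt_eq_rpow]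
    congr 1
    push_cast; ring
  have h3 : Real.pi / (4 * hb)⁻¹ = 4 * (Real.pi * hb) := by
    field_simp
  have h4 : ((4 : ℝ) * (Real.pi * hb)) ^ ((n : ℝ) / 2)
      = 2 ^ n * (Real.pi * hb) ^ ((n : ℝ) / 2) := by
    rw [Real.mul_rpow (by norm_num) hA.le]
    congr 1
    rw [show (4 : ℝ) = 2 ^ (2 : ℝ) by
        rw [show (2:ℝ) = ((2:ℕ):ℝ) by norm_num, Real.rpow_natCast]; norm_num,
      ← Real.rpow_mul (by norm_num)]
    rw [show (2 : ℝ) * ((n : ℝ) / 2) = (n : ℝ) by ring, Real.rpow_natCast]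
  have h5 : (Real.pi * hb) ^ (-(n : ℝ) / 2) * (Real.pi * hb) ^ ((n : ℝ) / 2) = 1 := by
    rw [← Real.rpow_add hA, show -(n : ℝ) / 2 + (n : ℝ) / 2 = 0 by ring, Real.rpow_zero]
  have hBne : (Real.pi * hb) ^ ((n : ℝ) / 2) ≠ 0 := by positivity
  have hst : Real.sqrt t ≠ 0 := by positivity
  have h2n : ((2 * Real.pi * hb) ^ n : ℝ) = 2 ^ n * (Real.pi * hb) ^ n := by
    rw [show (2 * Real.pi * hb) = 2 * (Real.pi * hb) by ring, mul_pow]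
  rw [h3, h4, h2n,
    mul_pow ((Real.pi * hb) ^ (-(n : ℝ) / 4)) (t ^ ((1 : ℝ) / 4)) 2, h1, h2]
  have hneg : (Real.pi * hb) ^ (-(n : ℝ) / 2) = ((Real.pi * hb) ^ ((n : ℝ) / 2))⁻¹ := by
    rw [← Real.rpow_neg hA.le, neg_div]
  rw [hneg]
  field_simp

open scoped MatrixOrder in
lemma gauss_int {n : ℕ} {X : Matrix (Fin n) (Fin n) ℝ} (hXpos : X.PosDef) (hXs : Xᵀ = X)
    {c : ℝ} (hc : 0 < c) (d : ℂ) (b : Fin n → ℝ) :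
    ∫ y : Fin n → ℝ, Complex.exp (-(c : ℂ) * ((X *ᵥ y ⬝ᵥ y : ℝ) : ℂ) + d * ((b ⬝ᵥ y : ℝ) : ℂ))
      = (((Real.pi / c) ^ ((n : ℝ) / 2) * (Real.sqrt X.det)⁻¹ : ℝ) : ℂ) *
        Complex.exp (d ^ 2 * ((X⁻¹ *ᵥ b ⬝ᵥ b : ℝ) : ℂ) / (4 * c)) := by
  classical
  set S := CFC.sqrt X with hSdef
  have hS : S * S = X := CFC.sqrt_mul_sqrt_self X hXpos.posSemidef.nonneg
  have hSps : S.PosSemidef := (CFC.sqrt_nonneg X).posSemidef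
  have hSsym : Sᵀ = S := hSps.isHermitian.eq
  have hdetX : (0 : ℝ) < X.det := hXpos.det_pos
  have hdetS2 : S.det * S.det = X.det := by rw [← det_mul, hS]
  have hdetSnn : 0 ≤ S.det := by
    rw [hSps.isHermitian.det_eq_prod_eigenvalues]
    exact Finset.prod_nonneg fun i _ => hSps.eigenvalues_nonneg i
  have hdetS : 0 < S.det := by nlinarith
  have hdetSne : S.det ≠ 0 := hdetS.ne'
  have hU : IsUnit S.det := hdetSne.isUnit
  have hsqrt : Real.sqrt X.det = S.det := by
    rw [← hdetS2, Real.sqrt_mul_self hdetSnn]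
  have hSinvT : S⁻¹ᵀ = S⁻¹ := by rw [transpose_nonsing_inv, hSsym]
  have hXinv : S⁻¹ * S⁻¹ = X⁻¹ := by rw [← hS, Matrix.mul_inv_rev]
  have hkey : S⁻¹ * X * S⁻¹ = 1 := by
    rw [← hS, mul_assoc, mul_assoc S S S⁻¹, Matrix.mul_nonsing_inv _ hU, mul_one,
      Matrix.nonsing_inv_mul _ hU]
  -- quadratic form becomes sum of squares
  have hq : ∀ u : Fin n → ℝ, X *ᵥ (S⁻¹ *ᵥ u) ⬝ᵥ (S⁻¹ *ᵥ u) = u ⬝ᵥ u := by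
    intro u
    rw [mulVec_mulVec, dotProduct_comm, dotProduct_mulVec, ← mulVec_transpose,
      transpose_mul, hSinvT, hXs, mulVec_mulVec, mul_assoc, ← mul_assoc, hkey, one_mulVec]
  -- linear form
  have hlin : ∀ u : Fin n → ℝ, b ⬝ᵥ (S⁻¹ *ᵥ u) = (S⁻¹ *ᵥ b) ⬝ᵥ u := by
    intro u
    rw [dotProduct_mulVec, ← mulVec_transpose, hSinvT]
  -- the integrand ∘ toLin' S⁻¹ is a standard Gaussian
  set T : (Fin n → ℝ) →ₗ[ℝ] (Fin n → ℝ) := Matrix.toLin' S⁻¹ with hTdef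
  have hTdet : LinearMap.det T = (S.det)⁻¹ := by
    rw [hTdef, LinearMap.det_toLin', Matrix.det_nonsing_inv, Ring.inverse_eq_inv']
  have hTdetne : LinearMap.det T ≠ 0 := by rw [hTdet]; exact inv_ne_zero hdetSne
  set f : (Fin n → ℝ) → ℂ := fun y =>
    Complex.exp (-(c : ℂ) * ((X *ᵥ y ⬝ᵥ y : ℝ) : ℂ) + d * ((b ⬝ᵥ y : ℝ) : ℂ)) with hfdef
  have hcq : Continuous fun y : Fin n → ℝ => X *ᵥ y ⬝ᵥ y := by
    simp only [dotProduct, mulVec]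
    exact continuous_finset_sum _ fun i _ =>
      (continuous_finset_sum _ fun j _ =>
        (continuous_const.mul (continuous_apply j))).mul (continuous_apply i)
  have hcl : Continuous fun y : Fin n → ℝ => b ⬝ᵥ y := by
    simp only [dotProduct]
    exact continuous_finset_sum _ fun i _ => continuous_const.mul (continuous_apply i)
  have hfc : Continuous f := by
    apply Complex.continuous_exp.comp
    exact ((continuous_const.mul (Complex.continuous_ofReal.comp hcq)).add
      (continuous_const.mul (Complex.continuous_ofReal.comp hcl)))
  have hmap : Measure.map T volume = ENNReal.ofReal |(LinearMap.det T)⁻¹| • volume :=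
    Real.map_linearMap_volume_pi_eq_smul_volume_pi hTdetne
  have hTm : Measurable T := T.continuous_of_finiteDimensional.measurable
  have habs : |(LinearMap.det T)⁻¹| = S.det := by
    rw [hTdet, inv_inv, abs_of_pos hdetS]
  have step1 : ∫ u, f (T u) = (S.det : ℂ) * ∫ y, f y := by
    rw [← MeasureTheory.integral_map hTm.aemeasurable hfc.aestronglyMeasurable, hmap,
      integral_smul_measure, ENNReal.toReal_ofReal (abs_nonneg _), habs, Complex.real_smul]
  have step2 : ∫ y, f y = ((S.det : ℝ)⁻¹ : ℂ) * ∫ u, f (T u) := by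
    rw [step1, ← mul_assoc]
    rw [inv_mul_cancel₀ (by exact_mod_cast hdetSne : (S.det : ℂ) ≠ 0), one_mul]
  -- rewrite f (T u) into the standard Gaussian form
  have hTapp : ∀ u, T u = S⁻¹ *ᵥ u := fun u => Matrix.toLin'_apply _ _
  have hpt : ∀ u : Fin n → ℝ, f (T u) =
      Complex.exp (-(c : ℂ) * ∑ i, ((u i : ℂ)) ^ 2 + ∑ i, (d * ((S⁻¹ *ᵥ b) i : ℂ)) * (u i : ℂ)) := by
    intro u
    rw [hfdef]
    simp only [hTapp, hq, hlin]
    have h1 : ((u ⬝ᵥ u : ℝ) : ℂ) = ∑ i, ((u i : ℂ)) ^ 2 := by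
      simp [dotProduct, sq]
    have h2 : (((S⁻¹ *ᵥ b) ⬝ᵥ u : ℝ) : ℂ) = ∑ i, ((S⁻¹ *ᵥ b) i : ℂ) * (u i : ℂ) := by
      simp [dotProduct]
    rw [h1, h2]
    congr 1
    congr 1
    rw [Finset.mul_sum]
    exact Finset.sum_congr rfl fun i _ => by ring
  have hgauss : ∫ u, f (T u) =
      (↑Real.pi / (c : ℂ)) ^ ((n : ℂ) / 2) *
        Complex.exp ((∑ i, (d * ((S⁻¹ *ᵥ b) i : ℂ)) ^ 2) / (4 * (c : ℂ))) := by
    rw [show (fun u => f (T u)) = fun u : Fin n → ℝ =>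
      Complex.exp (-(c : ℂ) * ∑ i, ((u i : ℂ)) ^ 2 + ∑ i, (d * ((S⁻¹ *ᵥ b) i : ℂ)) * (u i : ℂ))
      from funext hpt]
    have := GaussianFourier.integral_cexp_neg_mul_sum_add (b := (c : ℂ))
      (ι := Fin n) (by simpa using hc) (fun i => d * ((S⁻¹ *ᵥ b) i : ℂ))
    simpa using this
  -- assemble
  have hsum2 : ∑ i, (d * ((S⁻¹ *ᵥ b) i : ℂ)) ^ 2 = d ^ 2 * ((X⁻¹ *ᵥ b ⬝ᵥ b : ℝ) : ℂ) := by
    have ha : X⁻¹ *ᵥ b ⬝ᵥ b = (S⁻¹ *ᵥ b) ⬝ᵥ (S⁻¹ *ᵥ b) := by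
      rw [← hXinv, ← mulVec_mulVec, dotProduct_comm, hlin]
    rw [ha]
    have : (((S⁻¹ *ᵥ b) ⬝ᵥ (S⁻¹ *ᵥ b) : ℝ) : ℂ)
        = ∑ i, ((S⁻¹ *ᵥ b) i : ℂ) * ((S⁻¹ *ᵥ b) i : ℂ) := by simp [dotProduct]
    rw [this, Finset.mul_sum]
    exact Finset.sum_congr rfl fun i _ => by ring
  have hpow : ((Real.pi : ℂ) / (c : ℂ)) ^ ((n : ℂ) / 2)
      = (((Real.pi / c) ^ ((n : ℝ) / 2) : ℝ) : ℂ) := by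
    rw [show ((Real.pi : ℂ) / (c : ℂ)) = ((Real.pi / c : ℝ) : ℂ) by push_cast; ring,
      show ((n : ℂ) / 2) = (((n : ℝ) / 2 : ℝ) : ℂ) by push_cast; ring,
      ← Complex.ofReal_cpow (by positivity)]
  rw [step2, hgauss, hsum2, hpow, hsqrt]
  push_cast
  ring

/-- The Wigner transform of the squeezed coherent state `Φ_M`, `M = X + iY`, is the
Gaussian `(πħ)⁻ⁿ e^{-⟨Gz, z⟩/ħ}` with `G = ((X + Y X⁻¹ Y, Y X⁻¹), (X⁻¹ Y, X⁻¹))`. -/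
theorem wigner_squeezed {n : ℕ} (hn : 1 ≤ n) (hb : ℝ) (hhb : 0 < hb)
    (X Y : Matrix (Fin n) (Fin n) ℝ) (hX : X.IsSymm) (hY : Y.IsSymm) (hXpos : X.PosDef) :
    ∀ x p : Fin n → ℝ,
      wigner n hb (squeezed n hb X Y) x p =
        (((Real.pi * hb) ^ n : ℝ)⁻¹ : ℂ) *
          Complex.exp (-((((Matrix.fromBlocks (X + Y * X⁻¹ * Y) (Y * X⁻¹) (X⁻¹ * Y) X⁻¹).mulVec
            (Sum.elim x p) ⬝ᵥ Sum.elim x p : ℝ)) : ℂ) / (hb : ℂ)) := by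
  intro x p
  have hπ := Real.pi_pos
  have hXs : Xᵀ = X := hX
  have hc : (0 : ℝ) < (4 * hb)⁻¹ := by positivity
  have hbne : (hb : ℂ) ≠ 0 := by exact_mod_cast hhb.ne'
  set bv : Fin n → ℝ := Y *ᵥ x + p with hbv
  have comb : ∀ (a u v w : ℂ), Complex.exp u * (a * Complex.exp v) * (a * Complex.exp w)
      = a ^ 2 * Complex.exp (u + v + w) := by
    intro a u v w
    rw [Complex.exp_add, Complex.exp_add]; ring
  have hpoint : ∀ y : Fin n → ℝ,
      Complex.exp (-(Complex.I * ((p ⬝ᵥ y : ℝ) : ℂ)) / (hb : ℂ)) *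
        squeezed n hb X Y (x + y / 2) * (starRingEnd ℂ) (squeezed n hb X Y (x - y / 2))
      = ((((Real.pi * hb) ^ (-(n : ℝ) / 4) * X.det ^ ((1 : ℝ) / 4) : ℝ) : ℂ) ^ 2 *
          Complex.exp (-((X *ᵥ x ⬝ᵥ x : ℝ) : ℂ) / (hb : ℂ))) *
        Complex.exp (-((((4 * hb)⁻¹ : ℝ)) : ℂ) * ((X *ᵥ y ⬝ᵥ y : ℝ) : ℂ) +
          (-(Complex.I / (hb : ℂ))) * ((bv ⬝ᵥ y : ℝ) : ℂ)) := by
    intro y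
    rw [squeezed, squeezed, _root_.map_mul, ← Complex.exp_conj]
    simp only [map_div₀, map_neg, map_add, _root_.map_mul, map_ofNat, Complex.conj_ofReal,
      Complex.conj_I]
    rw [comb, mul_assoc, ← Complex.exp_add]
    congr 2
    have hq12 := quad_sum hX x y
    have hr12 := lin_diff hY x y
    have hby : bv ⬝ᵥ y = Y *ᵥ x ⬝ᵥ y + p ⬝ᵥ y := add_dotProduct _ _ _
    have hq12C : ((X *ᵥ (x + y / 2) ⬝ᵥ (x + y / 2) : ℝ) : ℂ)
        + ((X *ᵥ (x - y / 2) ⬝ᵥ (x - y / 2) : ℝ) : ℂ)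
        = 2 * ((X *ᵥ x ⬝ᵥ x : ℝ) : ℂ) + ((X *ᵥ y ⬝ᵥ y : ℝ) : ℂ) / 2 := by
      exact_mod_cast congrArg (Complex.ofReal) hq12
    have hr12C : ((Y *ᵥ (x + y / 2) ⬝ᵥ (x + y / 2) : ℝ) : ℂ)
        - ((Y *ᵥ (x - y / 2) ⬝ᵥ (x - y / 2) : ℝ) : ℂ)
        = 2 * ((Y *ᵥ x ⬝ᵥ y : ℝ) : ℂ) := by
      exact_mod_cast congrArg (Complex.ofReal) hr12
    have hbyC : ((bv ⬝ᵥ y : ℝ) : ℂ) = ((Y *ᵥ x ⬝ᵥ y : ℝ) : ℂ) + ((p ⬝ᵥ y : ℝ) : ℂ) := by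
      exact_mod_cast congrArg (Complex.ofReal) hby
    rw [hbyC]
    push_cast
    linear_combination (-1 / (2 * (hb : ℂ))) * hq12C + (-Complex.I / (2 * (hb : ℂ))) * hr12C
  rw [wigner, funext hpoint, MeasureTheory.integral_const_mul,
    gauss_int hXpos hXs hc (-(Complex.I / (hb : ℂ))) bv]
  have hG := Gsum hX hY x p
  have hexp : Complex.exp (-((X *ᵥ x ⬝ᵥ x : ℝ) : ℂ) / (hb : ℂ)) *
      Complex.exp ((-(Complex.I / (hb : ℂ))) ^ 2 * ((X⁻¹ *ᵥ bv ⬝ᵥ bv : ℝ) : ℂ)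
        / (4 * (((4 * hb)⁻¹ : ℝ) : ℂ)))
      = Complex.exp (-((((Matrix.fromBlocks (X + Y * X⁻¹ * Y) (Y * X⁻¹) (X⁻¹ * Y) X⁻¹).mulVec
          (Sum.elim x p) ⬝ᵥ Sum.elim x p : ℝ)) : ℂ) / (hb : ℂ)) := by
    rw [← Complex.exp_add]
    congr 1
    show _ = -((((Matrix.fromBlocks (X + Y * X⁻¹ * Y) (Y * X⁻¹) (X⁻¹ * Y) X⁻¹) *ᵥ
        (Sum.elim x p) ⬝ᵥ Sum.elim x p : ℝ)) : ℂ) / (hb : ℂ)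
    rw [← hbv] at hG
    rw [show (4 * (((4 * hb)⁻¹ : ℝ) : ℂ)) = ((hb : ℂ))⁻¹ by push_cast; field_simp,
      div_inv_eq_mul, hG]
    push_cast
    have hI : (Complex.I) ^ 2 = -1 := Complex.I_sq
    have hbinv : (hb : ℂ) * (hb : ℂ)⁻¹ = 1 := mul_inv_cancel₀ hbne
    linear_combination ((X⁻¹ *ᵥ bv ⬝ᵥ bv : ℝ) : ℂ) / (hb : ℂ) * hI +
      Complex.I ^ 2 * ((X⁻¹ *ᵥ bv ⬝ᵥ bv : ℝ) : ℂ) * (hb : ℂ)⁻¹ * hbinv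
  have hcon : ((((2 * Real.pi * hb) ^ n : ℝ)⁻¹ : ℂ)) *
      ((((Real.pi * hb) ^ (-(n : ℝ) / 4) * X.det ^ ((1 : ℝ) / 4) : ℝ)) : ℂ) ^ 2 *
      ((((Real.pi / (4 * hb)⁻¹) ^ ((n : ℝ) / 2) * (Real.sqrt X.det)⁻¹ : ℝ)) : ℂ)
      = (((Real.pi * hb) ^ n : ℝ)⁻¹ : ℂ) := by
    exact_mod_cast congrArg Complex.ofReal (const_id n hhb hXpos.det_pos)
  rw [← hexp]
  linear_combination (Complex.exp (-((X *ᵥ x ⬝ᵥ x : ℝ) : ℂ) / (hb : ℂ)) *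
    Complex.exp ((-(Complex.I / (hb : ℂ))) ^ 2 * ((X⁻¹ *ᵥ bv ⬝ᵥ bv : ℝ) : ℂ)
      / (4 * (((4 * hb)⁻¹ : ℝ) : ℂ)))) * hcon
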